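/- Let f : ℝ^ℓ → ℝ^ℓ be continuous, M > 0 a bound with ‖f(z)‖ ≤ M for all z, and suppose a probability measure P on ℝ^ℓ satisfies P({z : ⟨p, f(z)⟩ = 0}) = 0 for a fixed p ≠ 0. If m_U − m_L is bounded measurable and nonnegative, and g : ℝ^ℓ → ℝ^ℓ is continuous in a parameter η with ‖∂⟨p, g_η(z)⟩/∂η‖ ≤ M uniformly, then η ↦ ∫ ⟨p, g_{η₀}(z)⟩ (1{⟨p, g_η(z)⟩ > 0} − 1{⟨p, g_{η₀}(z)⟩ > 0})(m_U(z) − m_L(z)) dP(z) is differentiable at η₀ with derivative 0. In particular, |∫ ⟨p, g_{η₀}⟩ (1{⟨p, g_{η_n}⟩ > 0} − 1{⟨p, g_{η₀}⟩ > 0})(m_U − m_L) dP| / |η_n − η₀| → 0 as η_n → η₀. -/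

import Mathlib

open MeasureTheory Filter

/-- The integral appearing in Lemma C.6: the contribution of the switching set. -/
noncomputable def switchInt {ℓ : ℕ} (P : Measure (EuclideanSpace ℝ (Fin ℓ)))
    (p : EuclideanSpace ℝ (Fin ℓ))
    (g : ℝ → EuclideanSpace ℝ (Fin ℓ) → EuclideanSpace ℝ (Fin ℓ))
    (mL mU : EuclideanSpace ℝ (Fin ℓ) → ℝ) (η₀ η : ℝ) : ℝ :=
  ∫ z, (inner ℝ p (g η₀ z) : ℝ) *
      (((if 0 < (inner ℝ p (g η z) : ℝ) then (1 : ℝ) else 0) -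
        (if 0 < (inner ℝ p (g η₀ z) : ℝ) then (1 : ℝ) else 0)) * (mU z - mL z)) ∂P

/-- The switching set contributes nothing to the pathwise derivative:
`η ↦ ∫ ⟨p,g_{η₀}⟩(1{⟨p,g_η⟩>0} − 1{⟨p,g_{η₀}⟩>0})(m_U − m_L) dP` is differentiable
at `η₀` with derivative 0; in particular the difference quotient along any
sequence `η_n → η₀` tends to 0. -/
theorem stmt18 {ℓ : ℕ} (P : Measure (EuclideanSpace ℝ (Fin ℓ))) [IsProbabilityMeasure P]
    (M : ℝ) (hM : 0 < M)
    (g : ℝ → EuclideanSpace ℝ (Fin ℓ) → EuclideanSpace ℝ (Fin ℓ))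
    (hgmeas : ∀ η, Measurable (g η))
    (p : EuclideanSpace ℝ (Fin ℓ)) (hp : p ≠ 0) (η₀ : ℝ)
    (hgcont : Continuous (g η₀)) (hgb : ∀ z, ‖g η₀ z‖ ≤ M)
    (hzero : P {z | (inner ℝ p (g η₀ z) : ℝ) = 0} = 0)
    (mL mU : EuclideanSpace ℝ (Fin ℓ) → ℝ)
    (hmLm : Measurable mL) (hmUm : Measurable mU)
    (hmb : ∃ C : ℝ, ∀ z, |mL z| ≤ C ∧ |mU z| ≤ C)
    (hnn : ∀ z, 0 ≤ mU z - mL z)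
    (d : ℝ → EuclideanSpace ℝ (Fin ℓ) → ℝ)
    (hd : ∀ η z, HasDerivAt (fun t => (inner ℝ p (g t z) : ℝ)) (d η z) η)
    (hdb : ∀ η z, |d η z| ≤ M) :
    HasDerivAt (fun η => switchInt P p g mL mU η₀ η) 0 η₀ ∧
    ∀ q : ℕ → ℝ, Tendsto q atTop (nhdsWithin η₀ {η₀}ᶜ) →
      Tendsto (fun n => |switchInt P p g mL mU η₀ (q n)| / |q n - η₀|) atTop (nhds 0) := by
  obtain ⟨C, hC⟩ := hmb
  have hC0 : 0 ≤ C := le_trans (abs_nonneg _) (hC 0).1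
  set X : EuclideanSpace ℝ (Fin ℓ) → ℝ := fun z => (inner ℝ p (g η₀ z) : ℝ) with hXdef
  have hXc : Continuous X := continuous_const.inner hgcont
  have hXm : Measurable X := hXc.measurable
  set F : ℝ → ℝ := fun η => switchInt P p g mL mU η₀ η with hFdef
  have hF0 : F η₀ = 0 := by
    simp [hFdef, switchInt]
  -- key bound
  have key : ∀ η, |F η| ≤ 2 * C * M * |η - η₀| * (P {z | |X z| ≤ M * |η - η₀|}).toReal := by
    intro η
    set S : Set (EuclideanSpace ℝ (Fin ℓ)) := {z | |X z| ≤ M * |η - η₀|} with hSdef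
    have hS : MeasurableSet S := measurableSet_le hXm.abs measurable_const
    set K : ℝ := 2 * C * M * |η - η₀| with hKdef
    have hK0 : 0 ≤ K := by positivity
    have hbound : ∀ z, ‖X z * (((if 0 < (inner ℝ p (g η z) : ℝ) then (1:ℝ) else 0) -
        (if 0 < X z then (1:ℝ) else 0)) * (mU z - mL z))‖ ≤ S.indicator (fun _ => K) z := by
      intro z
      by_cases h : (if 0 < (inner ℝ p (g η z) : ℝ) then (1:ℝ) else 0) = (if 0 < X z then (1:ℝ) else 0)
      · rw [h]
        simp only [sub_self, zero_mul, mul_zero, norm_zero]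
        exact Set.indicator_nonneg (fun _ _ => hK0) z
      · -- the indicators differ so z ∈ S by MVT
        set Y : ℝ := (inner ℝ p (g η z) : ℝ) with hYdef
        have hlip : |Y - X z| ≤ M * |η - η₀| := by
          have := Convex.norm_image_sub_le_of_norm_hasDerivWithin_le
            (f := fun t => (inner ℝ p (g t z) : ℝ)) (f' := fun t => d t z) (C := M)
            (s := Set.univ) (fun t _ => (hd t z).hasDerivWithinAt)
            (fun t _ => by simpa [Real.norm_eq_abs] using hdb t z) convex_univ
            (Set.mem_univ η₀) (Set.mem_univ η)
          simpa [Real.norm_eq_abs] using this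
        have hstr : |X z| ≤ |Y - X z| := by
          by_cases hY : 0 < Y <;> by_cases hX : 0 < X z
          · simp [hY, hX] at h
          · push_neg at hX
            rw [abs_of_nonpos hX, abs_of_pos (by linarith : 0 < Y - X z)]; linarith
          · push_neg at hY
            rw [abs_of_pos hX, abs_of_nonpos (by linarith : Y - X z ≤ 0)]; linarith
          · simp [hY, hX] at h
        have hzS : z ∈ S := le_trans hstr hlip
        rw [Set.indicator_of_mem hzS]
        have h1 : |X z| ≤ M * |η - η₀| := hzS
        have h2 : |(if 0 < Y then (1:ℝ) else 0) - (if 0 < X z then (1:ℝ) else 0)| ≤ 1 := by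
          by_cases hY : 0 < Y <;> by_cases hX : 0 < X z <;> simp [hY, hX]
        have h3 : |mU z - mL z| ≤ 2 * C := by
          have := (hC z).1; have := (hC z).2
          have := abs_sub (mU z) (mL z)
          calc |mU z - mL z| ≤ |mU z| + |mL z| := abs_sub _ _
            _ ≤ 2 * C := by linarith [(hC z).1, (hC z).2]
        rw [Real.norm_eq_abs, abs_mul, abs_mul]
        calc |X z| * (|(if 0 < Y then (1:ℝ) else 0) - (if 0 < X z then (1:ℝ) else 0)| * |mU z - mL z|)
            ≤ (M * |η - η₀|) * (1 * (2 * C)) := by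
              apply mul_le_mul h1 (mul_le_mul h2 h3 (abs_nonneg _) zero_le_one)
                (mul_nonneg (abs_nonneg _) (abs_nonneg _))
                (by positivity)
          _ = K := by ring
    have hint : Integrable (S.indicator fun _ => K) P := (integrable_const K).indicator hS
    have := norm_integral_le_of_norm_le hint (Filter.Eventually.of_forall hbound)
    calc |F η| ≤ ∫ z, S.indicator (fun _ => K) z ∂P := by
          simpa [hFdef, switchInt, Real.norm_eq_abs] using this
      _ = (P S).toReal • K := integral_indicator_const K hS
      _ = K * (P S).toReal := by rw [smul_eq_mul, mul_comm]
  -- measure of small sets tends to 0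
  have hsmall : Tendsto (fun n : ℕ => (P {z | |X z| ≤ 1 / (n + 1)}).toReal) atTop (nhds 0) := by
    set s : ℕ → Set (EuclideanSpace ℝ (Fin ℓ)) := fun n => {z | |X z| ≤ 1 / (n + 1)} with hsdef
    have hmeas : ∀ n, NullMeasurableSet (s n) P :=
      fun n => (measurableSet_le hXm.abs measurable_const).nullMeasurableSet
    have hanti : Antitone s := by
      intro a b hab z hz
      have hz' : |X z| ≤ 1 / ((b:ℝ) + 1) := hz
      show |X z| ≤ 1 / ((a:ℝ) + 1)
      refine le_trans hz' ?_
      have h1 : ((a:ℝ) + 1) ≤ ((b:ℝ) + 1) := by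
        have : (a : ℝ) ≤ b := Nat.cast_le.mpr hab
        linarith
      exact one_div_le_one_div_of_le (by positivity) h1
    have hinter : ⋂ n, s n = {z | X z = 0} := by
      ext z
      simp only [Set.mem_iInter, Set.mem_setOf_eq, hsdef]
      constructor
      · intro h
        by_contra hne
        obtain ⟨n, hn⟩ := exists_nat_one_div_lt (abs_pos.mpr hne)
        exact absurd (h n) (not_le.mpr hn)
      · intro h n
        rw [h, abs_zero]; positivity
    have htend : Tendsto (fun n => P (s n)) atTop (nhds (P (⋂ n, s n))) :=
      tendsto_measure_iInter_atTop hmeas hanti ⟨0, measure_ne_top P _⟩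
    rw [hinter, hzero] at htend
    have : Tendsto (fun n => (P (s n)).toReal) atTop (nhds (0 : ENNReal).toReal) :=
      (ENNReal.tendsto_toReal (by simp)).comp htend
    simpa only [ENNReal.toReal_zero] using this
  -- slope tends to 0
  have hslope : Tendsto (slope F η₀) (nhdsWithin η₀ {η₀}ᶜ) (nhds 0) := by
    rw [Metric.tendsto_nhdsWithin_nhds]
    intro ε hε
    have hAε : 0 < ε / (2 * C * M + 1) := by positivity
    obtain ⟨n, hn⟩ := (hsmall.eventually (gt_mem_nhds hAε)).exists
    refine ⟨1 / ((n + 1) * M), by positivity, ?_⟩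
    intro x hx hdx
    have hxne : x ≠ η₀ := hx
    have hδ : 0 < |x - η₀| := abs_pos.mpr (sub_ne_zero.mpr hxne)
    have hδlt : |x - η₀| < 1 / ((n + 1) * M) := by
      simpa [Real.dist_eq] using hdx
    have hsub : {z | |X z| ≤ M * |x - η₀|} ⊆ {z | |X z| ≤ 1 / (n + 1)} := by
      intro z hz
      have hz' : |X z| ≤ M * |x - η₀| := hz
      show |X z| ≤ 1 / ((n:ℝ) + 1)
      refine le_trans hz' ?_
      have : M * |x - η₀| < M * (1 / ((n + 1) * M)) :=
        mul_lt_mul_of_pos_left hδlt hM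
      have heq : M * (1 / ((n + 1) * M)) = 1 / (n + 1) := by
        field_simp
      linarith
    have hPle : (P {z | |X z| ≤ M * |x - η₀|}).toReal ≤ (P {z | |X z| ≤ 1 / (n + 1)}).toReal :=
      ENNReal.toReal_mono (measure_ne_top P _) (measure_mono hsub)
    have hslope_eq : |slope F η₀ x| = |F x| / |x - η₀| := by
      rw [slope_def_field, hF0, sub_zero, abs_div]
    have hQ : (P {z | |X z| ≤ 1 / (n + 1)}).toReal < ε / (2 * C * M + 1) := hn
    rw [Real.dist_eq, sub_zero, hslope_eq, div_lt_iff₀ hδ]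
    calc |F x| ≤ 2 * C * M * |x - η₀| * (P {z | |X z| ≤ M * |x - η₀|}).toReal := key x
      _ ≤ 2 * C * M * |x - η₀| * (P {z | |X z| ≤ 1 / (n + 1)}).toReal := by
          apply mul_le_mul_of_nonneg_left hPle (by positivity)
      _ ≤ 2 * C * M * |x - η₀| * (ε / (2 * C * M + 1)) :=
          mul_le_mul_of_nonneg_left hQ.le (by positivity)
      _ < ε * |x - η₀| := by
          have hA1 : (0:ℝ) < 2 * C * M + 1 := by positivity
          have h4 : 2 * C * M * |x - η₀| * (ε / (2 * C * M + 1))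
              = (2 * C * M / (2 * C * M + 1)) * (ε * |x - η₀|) := by ring
          have h5 : 2 * C * M / (2 * C * M + 1) < 1 := (div_lt_one hA1).mpr (by linarith)
          rw [h4]
          calc (2 * C * M / (2 * C * M + 1)) * (ε * |x - η₀|)
              < 1 * (ε * |x - η₀|) := mul_lt_mul_of_pos_right h5 (mul_pos hε hδ)
            _ = ε * |x - η₀| := one_mul _
  constructor
  · exact hasDerivAt_iff_tendsto_slope.mpr hslope
  · intro q hq
    have h1 : Tendsto (fun n => |slope F η₀ (q n)|) atTop (nhds |0|) :=
      (hslope.comp hq).abs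
    have heq : ∀ x, |F x| / |x - η₀| = |slope F η₀ x| := by
      intro x
      rw [slope_def_field, hF0, sub_zero, abs_div]
    rw [abs_zero] at h1
    exact h1.congr (fun n => (heq (q n)).symm)
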